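/- Let K be a field, n, m ≥ 1, and identify the set of monic polynomials of degree d over K with K^d via coefficients. The multiplication map from (monic degree n) × (monic degree m) to (monic degree n+m) is a polynomial map, and its Jacobian determinant at a pair (g, h) equals, up to sign, the resultant of g and h. -/

import Mathlib

open Polynomial

/-- The monic polynomial `x^n + a_{n-1}x^{n-1} + ⋯ + a_0` with lower
coefficient vector `a : Fin n → R`. -/
noncomputable def monicOfCoeffs {R : Type*} [CommRing R] (n : ℕ) (a : Fin n → R) :
    Polynomial R :=
  X ^ n + ∑ i : Fin n, C (a i) * X ^ (i : ℕ)

/-- The multiplication map on (lower coefficients of) monic polynomials: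
`((a₀,…,a_{n-1}), (b₀,…,b_{m-1})) ↦` the lower coefficients of the product. -/
noncomputable def monicMul {K : Type*} [Field K] (n m : ℕ)
    (a : Fin n → K) (b : Fin m → K) : Fin (n + m) → K :=
  fun k => (monicOfCoeffs n a * monicOfCoeffs m b).coeff k

/-- The `k`-th coordinate of the multiplication map, as a (multivariate)
polynomial in the variables `a_i, b_j`. -/
noncomputable def monicMulPoly (K : Type*) [Field K] (n m : ℕ) (k : Fin (n + m)) :
    MvPolynomial (Fin n ⊕ Fin m) K :=
  (monicOfCoeffs n (fun i => MvPolynomial.X (Sum.inl i)) *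
    monicOfCoeffs m (fun j => MvPolynomial.X (Sum.inr j))).coeff k

/-- The Jacobian matrix of the multiplication map at the pair `(g, h)` given by
coefficient vectors `a`, `b`: the matrix of partial derivatives of the
coefficients of `g * h` with respect to the `a_i` and `b_j`. -/
noncomputable def monicMulJacobian {K : Type*} [Field K] (n m : ℕ)
    (a : Fin n → K) (b : Fin m → K) : Matrix (Fin (n + m)) (Fin (n + m)) K :=
  fun k l => MvPolynomial.eval (Sum.elim a b)
    (MvPolynomial.pderiv (finSumFinEquiv.symm l) (monicMulPoly K n m k))

/-- The Sylvester matrix of the pair of monic polynomials `(g, h)` given by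
lower coefficient vectors `a : Fin n → K` and `b : Fin m → K`:
`n` shifted copies of the coefficients of `h` and `m` shifted copies of the
coefficients of `g`. -/
noncomputable def sylvesterMatrix {K : Type*} [Field K] (n m : ℕ)
    (a : Fin n → K) (b : Fin m → K) : Matrix (Fin (n + m)) (Fin (n + m)) K :=
  fun i l =>
    Sum.elim
      (fun j : Fin n => if (j : ℕ) ≤ (i : ℕ)
        then (monicOfCoeffs m b).coeff ((i : ℕ) - (j : ℕ)) else 0)
      (fun j : Fin m => if (j : ℕ) ≤ (i : ℕ)
        then (monicOfCoeffs n a).coeff ((i : ℕ) - (j : ℕ)) else 0)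
      (finSumFinEquiv.symm l)

lemma monicOfCoeffs_coeff {R : Type*} [CommRing R] (n : ℕ) (a : Fin n → R) (i : ℕ) :
    (monicOfCoeffs n a).coeff i =
      (if i = n then 1 else 0) + (if h : i < n then a ⟨i, h⟩ else 0) := by
  simp only [monicOfCoeffs, coeff_add, coeff_X_pow, finset_sum_coeff, coeff_C_mul]
  congr 1
  by_cases h : i < n
  · rw [dif_pos h, Finset.sum_eq_single (⟨i, h⟩ : Fin n)]
    · simp
    · intro b _ hb
      rw [if_neg, mul_zero]
      exact fun hbi => hb (Fin.ext hbi.symm)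
    · intro hmem; exact absurd (Finset.mem_univ _) hmem
  · rw [dif_neg h, Finset.sum_eq_zero]
    intro j _
    rw [if_neg, mul_zero]
    exact fun hij => h (hij ▸ j.isLt)

lemma map_monicOfCoeffs {R S : Type*} [CommRing R] [CommRing S] (f : R →+* S)
    (n : ℕ) (a : Fin n → R) :
    (monicOfCoeffs n a).map f = monicOfCoeffs n (f ∘ a) := by
  simp [monicOfCoeffs, Polynomial.map_add, Polynomial.map_pow, Polynomial.map_sum,
    Polynomial.map_mul]

open MvPolynomial in
lemma pderiv_coeff_mul {σ K : Type*} [CommRing K] [DecidableEq σ] (d : σ)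
    (p q : Polynomial (MvPolynomial σ K)) (k : ℕ) :
    pderiv d ((p * q).coeff k) =
      ∑ x ∈ Finset.HasAntidiagonal.antidiagonal k,
        (pderiv d (p.coeff x.1) * q.coeff x.2 + p.coeff x.1 * pderiv d (q.coeff x.2)) := by
  rw [Polynomial.coeff_mul, map_sum]
  exact Finset.sum_congr rfl fun x _ => pderiv_mul

open MvPolynomial in
lemma pderiv_coeff_same {n m : ℕ} {K : Type*} [CommRing K] (j : Fin n) (i : ℕ) :
    pderiv (Sum.inl j : Fin n ⊕ Fin m)
      ((monicOfCoeffs n (fun i => (X (Sum.inl i) : MvPolynomial (Fin n ⊕ Fin m) K))).coeff i) =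
    if (j : ℕ) = i then 1 else 0 := by
  rw [monicOfCoeffs_coeff, map_add]
  have h1 : (pderiv (Sum.inl j : Fin n ⊕ Fin m))
      ((if i = n then 1 else 0 : MvPolynomial (Fin n ⊕ Fin m) K)) = 0 := by
    split <;> simp
  rw [h1, zero_add]
  by_cases h : i < n
  · rw [dif_pos h]
    by_cases hji : (j : ℕ) = i
    · rw [if_pos hji]
      have : (Sum.inl (⟨i, h⟩ : Fin n) : Fin n ⊕ Fin m) = Sum.inl j := by
        simp [Fin.ext_iff, hji.symm]
      rw [this, pderiv_X_self]
    · rw [if_neg hji, pderiv_X_of_ne]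
      simp [Fin.ext_iff]
      omega
  · rw [dif_neg h, if_neg (by omega), map_zero]

open MvPolynomial in
lemma pderiv_coeff_other {n m : ℕ} {K : Type*} [CommRing K] (j : Fin n) (i : ℕ) :
    pderiv (Sum.inl j : Fin n ⊕ Fin m)
      ((monicOfCoeffs m (fun i => (X (Sum.inr i) : MvPolynomial (Fin n ⊕ Fin m) K))).coeff i) =
    0 := by
  rw [monicOfCoeffs_coeff, map_add]
  have h1 : (pderiv (Sum.inl j : Fin n ⊕ Fin m))
      ((if i = m then 1 else 0 : MvPolynomial (Fin n ⊕ Fin m) K)) = 0 := by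
    split <;> simp
  rw [h1, zero_add]
  by_cases h : i < m
  · rw [dif_pos h, pderiv_X_of_ne (by simp)]
  · rw [dif_neg h, map_zero]

lemma sum_antidiag_pick {K : Type*} [AddCommMonoid K] (k j : ℕ) (c : ℕ → K) :
    ∑ x ∈ Finset.HasAntidiagonal.antidiagonal k, (if j = x.1 then c x.2 else 0) =
      if j ≤ k then c (k - j) else 0 := by
  rw [Finset.Nat.sum_antidiagonal_eq_sum_range_succ_mk, Finset.sum_ite_eq]
  simp [Nat.lt_succ_iff]

lemma sum_antidiag_pick2 {K : Type*} [AddCommMonoid K] (k j : ℕ) (c : ℕ → K) :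
    ∑ x ∈ Finset.HasAntidiagonal.antidiagonal k, (if j = x.2 then c x.1 else 0) =
      if j ≤ k then c (k - j) else 0 := by
  rw [← Finset.HasAntidiagonal.map_swap_antidiagonal, Finset.sum_map]
  exact sum_antidiag_pick k j c

open MvPolynomial in
lemma pderiv_coeff_same' {n m : ℕ} {K : Type*} [CommRing K] (j : Fin m) (i : ℕ) :
    pderiv (Sum.inr j : Fin n ⊕ Fin m)
      ((monicOfCoeffs m (fun i => (X (Sum.inr i) : MvPolynomial (Fin n ⊕ Fin m) K))).coeff i) =
    if (j : ℕ) = i then 1 else 0 := by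
  rw [monicOfCoeffs_coeff, map_add]
  have h1 : (pderiv (Sum.inr j : Fin n ⊕ Fin m))
      ((if i = m then 1 else 0 : MvPolynomial (Fin n ⊕ Fin m) K)) = 0 := by
    split <;> simp
  rw [h1, zero_add]
  by_cases h : i < m
  · rw [dif_pos h]
    by_cases hji : (j : ℕ) = i
    · rw [if_pos hji]
      have : (Sum.inr (⟨i, h⟩ : Fin m) : Fin n ⊕ Fin m) = Sum.inr j := by
        simp [Fin.ext_iff, hji.symm]
      rw [this, pderiv_X_self]
    · rw [if_neg hji, pderiv_X_of_ne]
      simp [Fin.ext_iff]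
      omega
  · rw [dif_neg h, if_neg (by omega), map_zero]

open MvPolynomial in
lemma pderiv_coeff_other' {n m : ℕ} {K : Type*} [CommRing K] (j : Fin m) (i : ℕ) :
    pderiv (Sum.inr j : Fin n ⊕ Fin m)
      ((monicOfCoeffs n (fun i => (X (Sum.inl i) : MvPolynomial (Fin n ⊕ Fin m) K))).coeff i) =
    0 := by
  rw [monicOfCoeffs_coeff, map_add]
  have h1 : (pderiv (Sum.inr j : Fin n ⊕ Fin m))
      ((if i = n then 1 else 0 : MvPolynomial (Fin n ⊕ Fin m) K)) = 0 := by
    split <;> simp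
  rw [h1, zero_add]
  by_cases h : i < n
  · rw [dif_pos h, pderiv_X_of_ne (by simp)]
  · rw [dif_neg h, map_zero]

open MvPolynomial in
lemma eval_coeff_inl {K : Type*} [Field K] {n m : ℕ} (a : Fin n → K) (b : Fin m → K) (t : ℕ) :
    MvPolynomial.eval (Sum.elim a b)
      ((monicOfCoeffs n (fun i => (X (Sum.inl i) : MvPolynomial (Fin n ⊕ Fin m) K))).coeff t) =
    (monicOfCoeffs n a).coeff t := by
  rw [← Polynomial.coeff_map, map_monicOfCoeffs]
  have : (⇑(MvPolynomial.eval (Sum.elim a b)) ∘ fun i => (MvPolynomial.X (Sum.inl i) : MvPolynomial (Fin n ⊕ Fin m) K)) = a := by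
    funext i; simp
  rw [this]

open MvPolynomial in
lemma eval_coeff_inr {K : Type*} [Field K] {n m : ℕ} (a : Fin n → K) (b : Fin m → K) (t : ℕ) :
    MvPolynomial.eval (Sum.elim a b)
      ((monicOfCoeffs m (fun i => (X (Sum.inr i) : MvPolynomial (Fin n ⊕ Fin m) K))).coeff t) =
    (monicOfCoeffs m b).coeff t := by
  rw [← Polynomial.coeff_map, map_monicOfCoeffs]
  have : (⇑(MvPolynomial.eval (Sum.elim a b)) ∘ fun i => (MvPolynomial.X (Sum.inr i) : MvPolynomial (Fin n ⊕ Fin m) K)) = b := by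
    funext i; simp
  rw [this]

open MvPolynomial in
lemma eval_monicMulPoly {K : Type*} [Field K] (n m : ℕ)
    (a : Fin n → K) (b : Fin m → K) (k : Fin (n + m)) :
    MvPolynomial.eval (Sum.elim a b) (monicMulPoly K n m k) = monicMul n m a b k := by
  unfold monicMulPoly monicMul
  rw [← Polynomial.coeff_map, Polynomial.map_mul, map_monicOfCoeffs, map_monicOfCoeffs]
  have h1 : (⇑(MvPolynomial.eval (Sum.elim a b)) ∘
      fun i => (MvPolynomial.X (Sum.inl i) : MvPolynomial (Fin n ⊕ Fin m) K)) = a := by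
    funext i; simp
  have h2 : (⇑(MvPolynomial.eval (Sum.elim a b)) ∘
      fun i => (MvPolynomial.X (Sum.inr i) : MvPolynomial (Fin n ⊕ Fin m) K)) = b := by
    funext i; simp
  rw [h1, h2]

open MvPolynomial in
lemma jac_eq_syl {K : Type*} [Field K] (n m : ℕ) (a : Fin n → K) (b : Fin m → K) :
    monicMulJacobian n m a b = sylvesterMatrix n m a b := by
  funext k l
  simp only [monicMulJacobian, sylvesterMatrix, monicMulPoly]
  rcases h : finSumFinEquiv.symm l with j | j <;>
    simp only [Sum.elim_inl, Sum.elim_inr]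
  · rw [pderiv_coeff_mul, map_sum]
    have step : ∀ x ∈ Finset.HasAntidiagonal.antidiagonal (k : ℕ),
        MvPolynomial.eval (Sum.elim a b)
          (pderiv (Sum.inl j)
              ((monicOfCoeffs n fun i =>
                (X (Sum.inl i) : MvPolynomial (Fin n ⊕ Fin m) K)).coeff x.1) *
            (monicOfCoeffs m fun i =>
                (X (Sum.inr i) : MvPolynomial (Fin n ⊕ Fin m) K)).coeff x.2 +
          (monicOfCoeffs n fun i =>
              (X (Sum.inl i) : MvPolynomial (Fin n ⊕ Fin m) K)).coeff x.1 *
            pderiv (Sum.inl j)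
              ((monicOfCoeffs m fun i =>
                (X (Sum.inr i) : MvPolynomial (Fin n ⊕ Fin m) K)).coeff x.2)) =
        if (j : ℕ) = x.1 then (monicOfCoeffs m b).coeff x.2 else 0 := by
      intro x _
      rw [pderiv_coeff_same, pderiv_coeff_other, mul_zero, add_zero, ite_mul, one_mul, zero_mul,
        apply_ite (MvPolynomial.eval (Sum.elim a b)), map_zero, eval_coeff_inr]
    rw [Finset.sum_congr rfl step, sum_antidiag_pick]
  · rw [pderiv_coeff_mul, map_sum]
    have step : ∀ x ∈ Finset.HasAntidiagonal.antidiagonal (k : ℕ),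
        MvPolynomial.eval (Sum.elim a b)
          (pderiv (Sum.inr j)
              ((monicOfCoeffs n fun i =>
                (X (Sum.inl i) : MvPolynomial (Fin n ⊕ Fin m) K)).coeff x.1) *
            (monicOfCoeffs m fun i =>
                (X (Sum.inr i) : MvPolynomial (Fin n ⊕ Fin m) K)).coeff x.2 +
          (monicOfCoeffs n fun i =>
              (X (Sum.inl i) : MvPolynomial (Fin n ⊕ Fin m) K)).coeff x.1 *
            pderiv (Sum.inr j)
              ((monicOfCoeffs m fun i =>
                (X (Sum.inr i) : MvPolynomial (Fin n ⊕ Fin m) K)).coeff x.2)) =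
        if (j : ℕ) = x.2 then (monicOfCoeffs n a).coeff x.1 else 0 := by
      intro x _
      rw [pderiv_coeff_same', pderiv_coeff_other', zero_mul, zero_add, mul_ite, mul_one, mul_zero,
        apply_ite (MvPolynomial.eval (Sum.elim a b)), map_zero, eval_coeff_inl]
    rw [Finset.sum_congr rfl step, sum_antidiag_pick2]


/-- The multiplication map on monic polynomials (in coefficient
coordinates) is a polynomial map, and its Jacobian determinant at any pair
`(g, h)` equals, up to sign, the resultant of `g` and `h` (the determinant of
their Sylvester matrix). -/
theorem stmt14 {K : Type*} [Field K] (n m : ℕ) (hn : 1 ≤ n) (hm : 1 ≤ m) :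
    (∀ (a : Fin n → K) (b : Fin m → K) (k : Fin (n + m)),
      monicMul n m a b k = MvPolynomial.eval (Sum.elim a b) (monicMulPoly K n m k)) ∧
    (∀ (a : Fin n → K) (b : Fin m → K),
      (monicMulJacobian n m a b).det = (sylvesterMatrix n m a b).det ∨
      (monicMulJacobian n m a b).det = -(sylvesterMatrix n m a b).det) := by
  refine ⟨fun a b k => (eval_monicMulPoly n m a b k).symm, fun a b => Or.inl ?_⟩
  rw [jac_eq_syl]
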